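/- Define the skew-symmetric pairing ⟨f|g⟩₁ = ∫∫_{ℝ²} g(x) f(y) sgn(x-y) dx dy on Schwartz functions. For the oscillator wave functions φ_j, one has ⟨φ_j'|φ_k⟩₁ = 2δ_{jk}. -/

import Mathlib

open MeasureTheory

open Real Filter Asymptotics

/-- Physicists' Hermite polynomials. -/
noncomputable def hermiteP : ℕ → ℝ → ℝ
  | 0 => fun _ => 1
  | 1 => fun x => 2 * x
  | (n + 2) => fun x => 2 * x * hermiteP (n + 1) x - 2 * ((n : ℝ) + 1) * hermiteP n x

noncomputable def Hpoly : ℕ → Polynomial ℝ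
  | 0 => 1
  | 1 => Polynomial.C 2 * Polynomial.X
  | (n + 2) => Polynomial.C 2 * Polynomial.X * Hpoly (n + 1)
      - Polynomial.C (2 * ((n : ℝ) + 1)) * Hpoly n

lemma hermiteP_eq (n : ℕ) (x : ℝ) : hermiteP n x = (Hpoly n).eval x := by
  induction n using Nat.twoStepInduction with
  | zero => simp [hermiteP, Hpoly]
  | one => simp [hermiteP, Hpoly]
  | more n ih1 ih2 => simp [hermiteP, Hpoly, ih1, ih2]

lemma hermiteP_succ (n : ℕ) (x : ℝ) :
    hermiteP (n + 1) x = 2 * x * hermiteP n x - 2 * n * hermiteP (n - 1) x := by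
  match n with
  | 0 => simp [hermiteP]
  | (m + 1) => simp [hermiteP]

lemma hermiteP_hasDerivAt (n : ℕ) (x : ℝ) :
    HasDerivAt (hermiteP n) (2 * n * hermiteP (n - 1) x) x := by
  induction n using Nat.twoStepInduction generalizing x with
  | zero => simpa [hermiteP] using (hasDerivAt_const x (1:ℝ))
  | one =>
    have : HasDerivAt (hermiteP 1) 2 x := by
      exact ((hasDerivAt_id x).const_mul (2:ℝ)).congr_deriv (by simp only [mul_one])
    simpa [hermiteP] using this
  | more n ih1 ih2 =>
    have h1 : HasDerivAt (fun x => 2 * x * hermiteP (n+1) x)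
        (2 * hermiteP (n+1) x + 2 * x * (2 * (n+1) * hermiteP n x)) x := by
      have := (((hasDerivAt_id x).const_mul (2:ℝ)).mul (by simpa using ih2 x))
      exact this.congr_deriv (by simp only [id, mul_one])
    have h2 : HasDerivAt (fun x => 2 * ((n:ℝ)+1) * hermiteP n x)
        (2 * ((n:ℝ)+1) * (2 * n * hermiteP (n-1) x)) x := (ih1 x).const_mul _
    have h := h1.sub h2
    have heq : (fun x => 2 * x * hermiteP (n+1) x - 2 * ((n:ℝ)+1) * hermiteP n x)
        = hermiteP (n + 2) := by funext y; simp [hermiteP]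
    rw [← heq]
    refine h.congr_deriv ?_
    rw [show n + 2 - 1 = n + 1 from rfl, hermiteP_succ n x]
    push_cast
    ring

lemma pg_bigO_top (p : Polynomial ℝ) {b : ℝ} (hb : 0 < b) :
    (fun x => p.eval x * Real.exp (-b * x ^ 2)) =O[atTop] fun x => Real.exp (-(1/2) * x) := by
  have h0 : (fun x : ℝ => p.eval x) =O[atTop] fun x => x ^ p.natDegree := by
    have := Polynomial.isBigO_of_degree_le (𝕜 := ℝ) (P := p) (Q := Polynomial.X ^ p.natDegree)
      (by simpa [Polynomial.degree_X_pow] using Polynomial.degree_le_natDegree)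
    simpa using this
  have h1 : (fun x : ℝ => x ^ (p.natDegree : ℝ) * Real.exp (-b * x ^ 2)) =o[atTop]
      fun x => Real.exp (-(1/2) * x) := rpow_mul_exp_neg_mul_sq_isLittleO_exp_neg hb _
  have h2 : (fun x : ℝ => x ^ p.natDegree * Real.exp (-b * x ^ 2)) =o[atTop]
      fun x => Real.exp (-(1/2) * x) := by
    refine h1.congr' ?_ (Eventually.of_forall fun _ => rfl)
    filter_upwards [eventually_gt_atTop (0:ℝ)] with x hx
    rw [Real.rpow_natCast]
  exact (h0.mul (isBigO_refl (fun x => Real.exp (-b * x ^ 2)) atTop)).trans h2.isBigO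

lemma pg_tendsto_top (p : Polynomial ℝ) {b : ℝ} (hb : 0 < b) :
    Tendsto (fun x => p.eval x * Real.exp (-b * x ^ 2)) atTop (nhds 0) := by
  refine (pg_bigO_top p hb).trans_tendsto ?_
  have : Tendsto (fun x : ℝ => -(1/2) * x) atTop atBot :=
    (tendsto_const_mul_atBot_of_neg (by norm_num : (-(1:ℝ)/2) < 0)).mpr tendsto_id |>.congr
      (fun x => by simp; ring)
  exact tendsto_exp_atBot.comp this

lemma pg_tendsto_bot (p : Polynomial ℝ) {b : ℝ} (hb : 0 < b) :
    Tendsto (fun x => p.eval x * Real.exp (-b * x ^ 2)) atBot (nhds 0) := by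
  have := (pg_tendsto_top (p.comp (-Polynomial.X)) hb).comp tendsto_neg_atBot_atTop
  refine this.congr fun x => ?_
  simp [Function.comp, Polynomial.eval_comp]

lemma pg_littleO_gauss (p : Polynomial ℝ) {b : ℝ} (hb : 0 < b) (l : Filter ℝ)
    (ht : Tendsto (fun x => p.eval x * Real.exp (-(b/2) * x ^ 2)) l (nhds 0)) :
    (fun x => p.eval x * Real.exp (-b * x ^ 2)) =o[l] fun x => Real.exp (-(b/2) * x ^ 2) := by
  refine isLittleO_of_tendsto (fun x hx => absurd hx (Real.exp_ne_zero _)) ?_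
  refine ht.congr fun x => ?_
  rw [eq_div_iff (Real.exp_ne_zero _)]
  rw [mul_assoc, ← Real.exp_add]
  ring_nf

lemma pg_integrable (p : Polynomial ℝ) {b : ℝ} (hb : 0 < b) :
    Integrable (fun x => p.eval x * Real.exp (-b * x ^ 2)) := by
  have hb2 : 0 < b / 2 := by linarith
  have hc : Continuous fun x : ℝ => p.eval x * Real.exp (-b * x ^ 2) :=
    p.continuous.mul (Real.continuous_exp.comp (by continuity))
  have hint : IntegrableAtFilter (fun x : ℝ => Real.exp (-(b/2) * x ^ 2)) atBot volume ∧
      IntegrableAtFilter (fun x : ℝ => Real.exp (-(b/2) * x ^ 2)) atTop volume := by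
    constructor <;>
      exact ⟨Set.univ, Filter.univ_mem, (integrable_exp_neg_mul_sq hb2).integrableOn⟩
  exact hc.locallyIntegrable.integrable_of_isBigO_atBot_atTop
    ((pg_littleO_gauss p hb _ (pg_tendsto_bot p hb2)).isBigO) hint.1
    ((pg_littleO_gauss p hb _ (pg_tendsto_top p hb2)).isBigO) hint.2

open Filter in
noncomputable def II (n k : ℕ) : ℝ := ∫ x : ℝ, hermiteP n x * hermiteP k x * Real.exp (-x ^ 2)

lemma he_integrable (m n : ℕ) :
    Integrable (fun x => hermiteP m x * hermiteP n x * Real.exp (-x ^ 2)) := by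
  have h := pg_integrable (Hpoly m * Hpoly n) (one_pos)
  refine h.congr (Eventually.of_forall fun x => ?_)
  simp [hermiteP_eq, neg_one_mul]

lemma gauss_hasDerivAt (n : ℕ) (x : ℝ) :
    HasDerivAt (fun x => hermiteP n x * Real.exp (-x ^ 2))
      (-(hermiteP (n + 1) x) * Real.exp (-x ^ 2)) x := by
  have he : HasDerivAt (fun x : ℝ => Real.exp (-x ^ 2)) (-(2 * x) * Real.exp (-x ^ 2)) x := by
    have h1 : HasDerivAt (fun x : ℝ => -x ^ 2) (-(2 * x)) x := by
      exact (hasDerivAt_pow 2 x).neg.congr_deriv (by simp)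
    simpa [mul_comm] using h1.exp
  have := (hermiteP_hasDerivAt n x).mul he
  refine this.congr_deriv ?_
  rw [hermiteP_succ n x]
  ring

lemma II_step (n k : ℕ) : II (n + 1) k = 2 * k * II n (k - 1) := by
  have hu : ∀ x, HasDerivAt (hermiteP k) (2 * k * hermiteP (k - 1) x) x :=
    hermiteP_hasDerivAt k
  have hv : ∀ x, HasDerivAt (fun x => hermiteP n x * Real.exp (-x ^ 2))
      (-(hermiteP (n + 1) x) * Real.exp (-x ^ 2)) x := gauss_hasDerivAt n
  have huv' : Integrable (fun x => hermiteP k x * (-(hermiteP (n + 1) x) * Real.exp (-x ^ 2))) := by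
    have h2 : Integrable (fun x => -(hermiteP k x * hermiteP (n + 1) x * Real.exp (-x ^ 2))) :=
      (he_integrable k (n + 1)).neg
    exact h2.congr (Eventually.of_forall fun x => by ring)
  have hu'v : Integrable
      (fun x => (2 * (k : ℝ) * hermiteP (k - 1) x) * (hermiteP n x * Real.exp (-x ^ 2))) := by
    refine ((he_integrable (k - 1) n).const_mul (2 * (k : ℝ))).congr ?_
    exact Filter.Eventually.of_forall fun x => by ring
  have huv : Integrable (fun x => hermiteP k x * (hermiteP n x * Real.exp (-x ^ 2))) := by
    refine (he_integrable k n).congr ?_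
    exact Filter.Eventually.of_forall fun x => by ring
  have key := integral_mul_deriv_eq_deriv_mul_of_integrable (fun x _ => hu x) (fun x _ => hv x) huv' hu'v huv
  have L : ∫ x : ℝ, hermiteP k x * (-(hermiteP (n + 1) x) * Real.exp (-x ^ 2))
      = -II (n + 1) k := by
    rw [II, ← integral_neg]
    congr 1; funext x; ring
  have R : ∫ x : ℝ, (2 * (k : ℝ) * hermiteP (k - 1) x) * (hermiteP n x * Real.exp (-x ^ 2))
      = 2 * k * II n (k - 1) := by
    rw [II, ← integral_const_mul]
    congr 1; funext x; ring
  rw [L, R] at key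
  linarith [key]

lemma II_symm (n k : ℕ) : II n k = II k n := by
  unfold II; congr 1; funext x; ring

lemma II_eq (j k : ℕ) :
    II j k = if j = k then 2 ^ j * (j.factorial : ℝ) * Real.sqrt Real.pi else 0 := by
  induction j generalizing k with
  | zero =>
    match k with
    | 0 =>
      simp only [if_pos rfl]
      have : II 0 0 = ∫ x : ℝ, Real.exp (-1 * x ^ 2) := by
        unfold II; congr 1; funext x; simp [hermiteP]
      rw [this, integral_gaussian]
      norm_num
    | (c + 1) =>
      rw [II_symm, II_step]
      simp
  | succ j ih =>
    match k with
    | 0 => rw [II_step]; simp [Nat.succ_ne_zero]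
    | (c + 1) =>
      rw [II_step]
      simp only [Nat.add_sub_cancel, ih c]
      by_cases h : j = c
      · subst h
        simp [Nat.factorial_succ]
        push_cast
        ring
      · simp [h, fun hh => h (Nat.succ_injective hh)]

/-- The oscillator wave functions `φ_j(x) = (2^j j! √π)^{-1/2} e^{-x²/2} H_j(x)`. -/
noncomputable def phi (j : ℕ) (x : ℝ) : ℝ :=
  (Real.sqrt (2 ^ j * (j.factorial : ℝ) * Real.sqrt Real.pi))⁻¹ *
    Real.exp (-x ^ 2 / 2) * hermiteP j x

noncomputable def NC (j : ℕ) : ℝ :=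
  (Real.sqrt (2 ^ j * (j.factorial : ℝ) * Real.sqrt Real.pi))⁻¹

lemma phi_NC (j : ℕ) (x : ℝ) : phi j x = NC j * Real.exp (-x ^ 2 / 2) * hermiteP j x := rfl

noncomputable def pd (j : ℕ) (x : ℝ) : ℝ :=
  NC j * Real.exp (-x ^ 2 / 2) * (2 * j * hermiteP (j - 1) x - x * hermiteP j x)

lemma exp_half_eq (x : ℝ) : Real.exp (-x ^ 2 / 2) = Real.exp (-(1/2) * x ^ 2) := by
  congr 1; ring

lemma phi_eq_poly (j : ℕ) (x : ℝ) :
    phi j x = (Polynomial.C (NC j) * Hpoly j).eval x * Real.exp (-(1/2) * x ^ 2) := by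
  rw [phi, exp_half_eq]
  simp [hermiteP_eq, NC]
  ring

lemma pd_eq_poly (j : ℕ) (x : ℝ) :
    pd j x = (Polynomial.C (NC j) *
        (Polynomial.C 2 * Polynomial.C (j : ℝ) * Hpoly (j - 1) - Polynomial.X * Hpoly j)).eval x
      * Real.exp (-(1/2) * x ^ 2) := by
  rw [pd, exp_half_eq]
  simp [hermiteP_eq]
  ring

lemma phi_integrable (j : ℕ) : Integrable (phi j) := by
  have := pg_integrable (Polynomial.C (NC j) * Hpoly j) (by norm_num : (0:ℝ) < 1/2)
  exact this.congr (Eventually.of_forall fun x => (phi_eq_poly j x).symm)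

lemma pd_integrable (j : ℕ) : Integrable (pd j) := by
  have := pg_integrable (Polynomial.C (NC j) *
    (Polynomial.C 2 * Polynomial.C (j : ℝ) * Hpoly (j - 1) - Polynomial.X * Hpoly j))
    (by norm_num : (0:ℝ) < 1/2)
  exact this.congr (Eventually.of_forall fun x => (pd_eq_poly j x).symm)

lemma phi_mul_integrable (j k : ℕ) : Integrable (fun x => phi j x * phi k x) := by
  have := pg_integrable (Polynomial.C (NC j * NC k) * (Hpoly j * Hpoly k)) one_pos
  refine this.congr (Eventually.of_forall fun x => ?_)
  simp only [phi_NC, hermiteP_eq, Polynomial.eval_mul, Polynomial.eval_C]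
  rw [show Real.exp (-1 * x ^ 2) = Real.exp (-x^2/2) * Real.exp (-x^2/2) by
    rw [← Real.exp_add]; congr 1; ring]
  ring

lemma phi_hasDerivAt (j : ℕ) (x : ℝ) : HasDerivAt (phi j) (pd j x) x := by
  have he : HasDerivAt (fun x : ℝ => Real.exp (-x ^ 2 / 2)) (-x * Real.exp (-x ^ 2 / 2)) x := by
    have h1 : HasDerivAt (fun x : ℝ => -x ^ 2 / 2) (-x) x := by
      have := (hasDerivAt_pow 2 x).neg.div_const 2
      simpa using this.congr_deriv (by ring)
    simpa [mul_comm] using h1.exp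
  have h2 := ((he.const_mul (NC j)).mul (hermiteP_hasDerivAt j x))
  have heq : (fun x => NC j * Real.exp (-x ^ 2 / 2) * hermiteP j x) = phi j := by
    funext y; rw [phi, NC]
  rw [← heq]
  refine h2.congr_deriv ?_
  rw [pd]
  ring

lemma deriv_phi (j : ℕ) : deriv (phi j) = pd j :=
  funext fun x => (phi_hasDerivAt j x).deriv

lemma phi_tendsto_top (j : ℕ) : Tendsto (phi j) atTop (nhds 0) := by
  have := pg_tendsto_top (Polynomial.C (NC j) * Hpoly j) (by norm_num : (0:ℝ) < 1/2)
  exact this.congr fun x => (phi_eq_poly j x).symm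

lemma phi_tendsto_bot (j : ℕ) : Tendsto (phi j) atBot (nhds 0) := by
  have := pg_tendsto_bot (Polynomial.C (NC j) * Hpoly j) (by norm_num : (0:ℝ) < 1/2)
  exact this.congr fun x => (phi_eq_poly j x).symm

lemma phi_orthonormal (j k : ℕ) :
    (∫ x : ℝ, phi j x * phi k x) = if j = k then 1 else 0 := by
  have hpos : 0 < 2 ^ j * (j.factorial : ℝ) * Real.sqrt Real.pi := by
    have : 0 < Real.sqrt Real.pi := Real.sqrt_pos.mpr Real.pi_pos
    positivity
  have h1 : (∫ x : ℝ, phi j x * phi k x) = NC j * NC k * II j k := by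
    rw [II, ← integral_const_mul]
    congr 1; funext x
    simp only [phi_NC]
    rw [show Real.exp (-x ^ 2) = Real.exp (-x^2/2) * Real.exp (-x^2/2) by
      rw [← Real.exp_add]; congr 1; ring]
    ring
  rw [h1, II_eq]
  by_cases h : j = k
  · subst h
    simp only [if_pos rfl]
    rw [NC, ← mul_inv, Real.mul_self_sqrt hpos.le]
    exact inv_mul_cancel₀ hpos.ne'
  · simp [h]

lemma integral_pd (j : ℕ) : (∫ x : ℝ, pd j x) = 0 := by
  have h := integral_of_hasDerivAt_of_tendsto (phi_hasDerivAt j) (pd_integrable j)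
    (phi_tendsto_bot j) (phi_tendsto_top j)
  simpa using h

lemma hermiteP_continuous (k : ℕ) : Continuous (hermiteP k) := by
  have : hermiteP k = fun x => (Hpoly k).eval x := funext (hermiteP_eq k)
  rw [this]; exact (Hpoly k).continuous

lemma phi_continuous (k : ℕ) : Continuous (phi k) := by
  have : phi k = fun x => NC k * Real.exp (-x ^ 2 / 2) * hermiteP k x := rfl
  rw [this]
  exact (continuous_const.mul (Real.continuous_exp.comp (by continuity))).mul
    (hermiteP_continuous k)

/-- with the skew-symmetric pairing
`⟨f|g⟩₁ = ∫∫ g(x) f(y) sgn(x-y) dx dy`, one has `⟨φ_j'|φ_k⟩₁ = 2 δ_{jk}`. -/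
theorem stmt5 (j k : ℕ) :
    (∫ y : ℝ, ∫ x : ℝ, phi k x * deriv (phi j) y * Real.sign (x - y)) =
      if j = k then 2 else 0 := by
  rw [deriv_phi]
  have hkint := phi_integrable k
  set T : ℝ := ∫ x : ℝ, phi k x with hT
  set U : ℝ → ℝ := fun y => ∫ x in Set.Iic y, phi k x with hUdef
  have hUG : ∀ y : ℝ, U y = (∫ x in Set.Iic (0:ℝ), phi k x) + ∫ t in (0:ℝ)..y, phi k t := by
    intro y
    have h := intervalIntegral.integral_Iic_sub_Iic hkint.integrableOn hkint.integrableOn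
      (a := 0) (b := y)
    simp only [hUdef]
    linarith
  have hUderiv : ∀ y : ℝ, HasDerivAt U (phi k y) y := by
    intro y
    have hG : HasDerivAt (fun y => ∫ t in (0:ℝ)..y, phi k t) (phi k y) y :=
      intervalIntegral.integral_hasDerivAt_right (hkint.intervalIntegrable)
        ((phi_continuous k).stronglyMeasurableAtFilter _ _) (phi_continuous k).continuousAt
    have : U = fun y => (∫ x in Set.Iic (0:ℝ), phi k x) + ∫ t in (0:ℝ)..y, phi k t :=
      funext hUG
    rw [this]
    exact hG.const_add _
  have hUc : Continuous U := continuous_iff_continuousAt.mpr fun y => (hUderiv y).continuousAt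
  have hUbdd : ∃ C, ∀ y, ‖U y‖ ≤ C := by
    refine ⟨∫ x : ℝ, ‖phi k x‖, fun y => ?_⟩
    calc ‖U y‖ ≤ ∫ x in Set.Iic y, ‖phi k x‖ := norm_integral_le_integral_norm _
      _ ≤ ∫ x : ℝ, ‖phi k x‖ :=
        setIntegral_le_integral hkint.norm (Eventually.of_forall fun x => norm_nonneg _)
  have hsign : ∀ y x : ℝ, phi k x * Real.sign (x - y)
      = Set.indicator (Set.Ioi y) (phi k) x - Set.indicator (Set.Iio y) (phi k) x := by
    intro y x
    rcases lt_trichotomy x y with h | h | h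
    · rw [Real.sign_of_neg (sub_neg.mpr h),
        Set.indicator_of_notMem (by simp [Set.mem_Ioi, not_lt, h.le]),
        Set.indicator_of_mem (Set.mem_Iio.mpr h)]
      ring
    · rw [h, sub_self, Real.sign_zero,
        Set.indicator_of_notMem (by simp), Set.indicator_of_notMem (by simp)]
      ring
    · rw [Real.sign_of_pos (sub_pos.mpr h),
        Set.indicator_of_mem (Set.mem_Ioi.mpr h),
        Set.indicator_of_notMem (by simp [Set.mem_Iio, not_lt, h.le])]
      ring
  have hinner : ∀ y : ℝ, (∫ x : ℝ, phi k x * Real.sign (x - y)) = T - 2 * U y := by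
    intro y
    have hIoi : Integrable (Set.indicator (Set.Ioi y) (phi k)) :=
      hkint.indicator measurableSet_Ioi
    have hIio : Integrable (Set.indicator (Set.Iio y) (phi k)) :=
      hkint.indicator measurableSet_Iio
    rw [show (fun x => phi k x * Real.sign (x - y))
        = fun x => Set.indicator (Set.Ioi y) (phi k) x - Set.indicator (Set.Iio y) (phi k) x
      from funext (hsign y)]
    rw [integral_sub hIoi hIio, integral_indicator measurableSet_Ioi,
      integral_indicator measurableSet_Iio]
    have h1 : (∫ x in Set.Iic y, phi k x) + ∫ x in Set.Ioi y, phi k x = T :=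
      intervalIntegral.integral_Iic_add_Ioi hkint.integrableOn hkint.integrableOn
    have h2 : (∫ x in Set.Iio y, phi k x) = ∫ x in Set.Iic y, phi k x :=
      (integral_Iic_eq_integral_Iio).symm
    rw [h2]
    simp only [hUdef]
    linarith
  have hUpd : Integrable (fun y => U y * pd j y) :=
    (pd_integrable j).bdd_mul hUc.aestronglyMeasurable (ae_of_all _ hUbdd.choose_spec)
  have hUphi : Integrable (fun y => U y * phi j y) :=
    (phi_integrable j).bdd_mul hUc.aestronglyMeasurable (ae_of_all _ hUbdd.choose_spec)
  have hibp : (∫ y : ℝ, U y * pd j y) = -∫ y : ℝ, phi k y * phi j y :=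
    integral_mul_deriv_eq_deriv_mul_of_integrable (fun y _ => hUderiv y) (fun y _ => phi_hasDerivAt j y)
      hUpd (phi_mul_integrable k j) hUphi
  have step1 : (∫ y : ℝ, ∫ x : ℝ, phi k x * pd j y * Real.sign (x - y))
      = ∫ y : ℝ, (T * pd j y - 2 * (U y * pd j y)) := by
    congr 1; funext y
    rw [show (fun x => phi k x * pd j y * Real.sign (x - y))
        = fun x => pd j y * (phi k x * Real.sign (x - y)) from funext fun x => by ring]
    rw [integral_const_mul, hinner y]
    ring
  rw [step1, integral_sub ((pd_integrable j).const_mul T) (hUpd.const_mul 2),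
    integral_const_mul, integral_const_mul, integral_pd, hibp, phi_orthonormal]
  by_cases h : j = k
  · subst h; simp
  · simp [h, Ne.symm h]
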